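/- Suppose the pair (T, G^{(1)}) is pointwise of weak Lie type. Let z ∈ M with d := ord(z) < ∞ and let N ≥ 0. If for every k ≥ 1 the closure of the orbit G^{(k)}z contains {z} + M_{N+k+d}, then for every k > N the closure of T^{(k)}(z) contains M_{N+k+d}. -/

import Mathlib

variable {𝕜 M : Type*} [CommRing 𝕜] [AddCommGroup M] [Module 𝕜 M]

/-- `End^{(i)}` : the 𝕜-submodule of endomorphisms shifting the filtration by `i`. -/
def EndS (Mf : ℕ → Submodule 𝕜 M) (i : ℕ) : Submodule 𝕜 (Module.End 𝕜 M) where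
  carrier := {φ | ∀ j : ℕ, ∀ x ∈ Mf j, φ x ∈ Mf (j + i)}
  add_mem' := by
    intro a b ha hb j x hx
    simpa [LinearMap.add_apply] using add_mem (ha j x hx) (hb j x hx)
  zero_mem' := by
    intro j x hx
    simpa using (Mf (j + i)).zero_mem
  smul_mem' := by
    intro c a ha j x hx
    simpa [LinearMap.smul_apply] using Submodule.smul_mem _ c (ha j x hx)

/-- `GL^{(i)}` (for `i ≥ 1`): units `u` such that `u` and `u⁻¹` preserve the filtration
and `u - 1`, `u⁻¹ - 1` lie in `End^{(i)}`. -/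
def GLFil (Mf : ℕ → Submodule 𝕜 M) (i : ℕ) : Set (Module.End 𝕜 M)ˣ :=
  {u | (∀ j : ℕ, ∀ x ∈ Mf j, (u : Module.End 𝕜 M) x ∈ Mf j) ∧
    (∀ j : ℕ, ∀ x ∈ Mf j, ((u⁻¹ : (Module.End 𝕜 M)ˣ) : Module.End 𝕜 M) x ∈ Mf j) ∧
    ((u : Module.End 𝕜 M) - 1) ∈ EndS Mf i ∧
    (((u⁻¹ : (Module.End 𝕜 M)ˣ) : Module.End 𝕜 M) - 1) ∈ EndS Mf i}

/-- `ord(z) = sup {j : z ∈ M_j} ∈ ℕ ∪ {∞}`. -/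
noncomputable def ordM (Mf : ℕ → Submodule 𝕜 M) (z : M) : ℕ∞ :=
  ⨆ j ∈ {j : ℕ | z ∈ Mf j}, (j : ℕ∞)

/-- `ord(φ) = sup {i : φ ∈ End^{(i)}} ∈ ℕ ∪ {∞}`. -/
noncomputable def ordE (Mf : ℕ → Submodule 𝕜 M) (φ : Module.End 𝕜 M) : ℕ∞ :=
  ⨆ i ∈ {i : ℕ | φ ∈ EndS Mf i}, (i : ℕ∞)

/-- Closure of a subset in the filtration topology: `X̄ = ⋂_{j≥1} (X + M_j)`. -/
def clFil (Mf : ℕ → Submodule 𝕜 M) (X : Set M) : Set M :=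
  {m | ∀ j : ℕ, 1 ≤ j → ∃ x ∈ X, m - x ∈ Mf j}

/-- `T^{(i)}(z) = {ξ(z) : ξ ∈ T ∩ End^{(i)}}`. -/
def TOrbit (Mf : ℕ → Submodule 𝕜 M) (T : Submodule 𝕜 (Module.End 𝕜 M)) (i : ℕ)
    (z : M) : Set M :=
  {m | ∃ ξ : Module.End 𝕜 M, ξ ∈ T ∧ ξ ∈ EndS Mf i ∧ ξ z = m}

/-- `G^{(i)}z = {u(z) : u ∈ G ∩ GL^{(i)}}`. -/
def GOrbit (Mf : ℕ → Submodule 𝕜 M) (G : Subgroup (Module.End 𝕜 M)ˣ) (i : ℕ)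
    (z : M) : Set M :=
  {m | ∃ u : (Module.End 𝕜 M)ˣ, u ∈ G ∧ u ∈ GLFil Mf i ∧ (u : Module.End 𝕜 M) z = m}

/-- The pair `(T, G)` is pointwise of Lie type for the index `i`. -/
def IsPointwiseLie (Mf : ℕ → Submodule 𝕜 M) (T : Submodule 𝕜 (Module.End 𝕜 M))
    (G : Subgroup (Module.End 𝕜 M)ˣ) (i : ℕ) : Prop :=
  (∀ ξ : Module.End 𝕜 M, ξ ∈ T → ξ ∈ EndS Mf i → ∀ z : M,
    ∃ u : (Module.End 𝕜 M)ˣ, u ∈ G ∧ u ∈ GLFil Mf i ∧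
      (ordM Mf (ξ z) < ⊤ →
        ordM Mf (((u : Module.End 𝕜 M) - 1 - ξ) z) > ordM Mf (ξ z))) ∧
  (∀ u : (Module.End 𝕜 M)ˣ, u ∈ G → u ∈ GLFil Mf i → ∀ z : M,
    ∃ ξ : Module.End 𝕜 M, ξ ∈ T ∧ ξ ∈ EndS Mf i ∧
      (ordM Mf (((u : Module.End 𝕜 M) - 1) z) < ⊤ →
        ordM Mf (((u : Module.End 𝕜 M) - 1 - ξ) z)
          > ordM Mf (((u : Module.End 𝕜 M) - 1) z)))

/-- The pair `(T, G)` is pointwise of weak Lie type. -/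
def IsPointwiseWeakLie (Mf : ℕ → Submodule 𝕜 M) (T : Submodule 𝕜 (Module.End 𝕜 M))
    (G : Subgroup (Module.End 𝕜 M)ˣ) : Prop :=
  ∀ i : ℕ, 1 ≤ i →
    (∀ ξ : Module.End 𝕜 M, ξ ∈ T → ξ ∈ EndS Mf i → ∀ z : M,
      ∃ u : (Module.End 𝕜 M)ˣ, u ∈ G ∧ u ∈ GLFil Mf i ∧
        (ordM Mf (ξ z) < ⊤ →
          ordM Mf (((u : Module.End 𝕜 M) - 1 - ξ) z)
            ≥ 2 * ordE Mf ξ + ordM Mf z)) ∧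
    (∀ u : (Module.End 𝕜 M)ˣ, u ∈ G → u ∈ GLFil Mf i → ∀ z : M,
      ∃ ξ : Module.End 𝕜 M, ξ ∈ T ∧ ξ ∈ EndS Mf i ∧
        (ordM Mf (((u : Module.End 𝕜 M) - 1) z) < ⊤ →
          ordM Mf (((u : Module.End 𝕜 M) - 1 - ξ) z)
            ≥ 2 * ordE Mf ((u : Module.End 𝕜 M) - 1) + ordM Mf z))

lemma mem_of_le_ordM (Mf : ℕ → Submodule 𝕜 M) (hMf0 : Mf 0 = ⊤) (hMf : Antitone Mf)
    {x : M} {m : ℕ} (h : (m : ℕ∞) ≤ ordM Mf x) : x ∈ Mf m := by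
  rcases Nat.eq_zero_or_pos m with rfl | hm
  · rw [hMf0]; trivial
  · by_contra hx
    have hb : ordM Mf x ≤ ((m - 1 : ℕ) : ℕ∞) := by
      refine iSup₂_le fun j hj => ?_
      have hjm : j < m := by
        by_contra hjm
        exact hx (hMf (le_of_not_gt hjm) hj)
      exact_mod_cast Nat.le_sub_one_of_lt hjm
    have h2 : (m : ℕ∞) ≤ ((m - 1 : ℕ) : ℕ∞) := h.trans hb
    have h3 : m ≤ m - 1 := by exact_mod_cast h2
    omega

lemma le_ordE (Mf : ℕ → Submodule 𝕜 M) {φ : Module.End 𝕜 M} {k : ℕ}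
    (h : φ ∈ EndS Mf k) : (k : ℕ∞) ≤ ordE Mf φ :=
  le_iSup₂ (f := fun (i : ℕ) (_ : i ∈ {i : ℕ | φ ∈ EndS Mf i}) => (i : ℕ∞)) k h

lemma endS_anti (Mf : ℕ → Submodule 𝕜 M) (hMf : Antitone Mf) {i i' : ℕ} (h : i ≤ i') :
    EndS Mf i' ≤ EndS Mf i := fun φ hφ j x hx => hMf (by omega) (hφ j x hx)

lemma step11 (Mf : ℕ → Submodule 𝕜 M) (hMf0 : Mf 0 = ⊤) (hMf : Antitone Mf)
    (G : Subgroup (Module.End 𝕜 M)ˣ)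
    (T : Submodule 𝕜 (Module.End 𝕜 M))
    (hLie : IsPointwiseWeakLie Mf T G)
    (z : M) (d : ℕ) (hz : ordM Mf z = (d : ℕ∞)) (N : ℕ)
    (hGz : ∀ k : ℕ, 1 ≤ k → ∀ w ∈ Mf (N + k + d),
      z + w ∈ clFil Mf (GOrbit Mf G k z))
    {k : ℕ} (hk : N < k) {w : M} (hw : w ∈ Mf (N + k + d)) :
    ∃ ξ : Module.End 𝕜 M, ξ ∈ T ∧ ξ ∈ EndS Mf k ∧ w - ξ z ∈ Mf (2 * k + d) := by
  have hk1 : 1 ≤ k := by omega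
  obtain ⟨x, hx, hxj⟩ := hGz k hk1 w hw (2 * k + d) (by omega)
  obtain ⟨u, huG, huk, rfl⟩ := hx
  obtain ⟨ξ, hξT, hξk, himp⟩ := (hLie k hk1).2 u huG huk z
  have hw1 : w - ((u : Module.End 𝕜 M) - 1) z ∈ Mf (2 * k + d) := by
    have heq : z + w - (u : Module.End 𝕜 M) z
        = w - ((u : Module.End 𝕜 M) - 1) z := by
      simp only [LinearMap.sub_apply, Module.End.one_apply]
      abel
    rwa [heq] at hxj
  by_cases hfin : ordM Mf (((u : Module.End 𝕜 M) - 1) z) < ⊤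
  · have h2 := himp hfin
    have hmem : ((u : Module.End 𝕜 M) - 1 - ξ) z ∈ Mf (2 * k + d) := by
      apply mem_of_le_ordM Mf hMf0 hMf
      refine le_trans ?_ h2
      push_cast
      exact add_le_add (mul_le_mul_right (le_ordE Mf huk.2.2.1) 2) (by rw [hz])
    refine ⟨ξ, hξT, hξk, ?_⟩
    have heq : w - ξ z = (w - ((u : Module.End 𝕜 M) - 1) z)
        + ((u : Module.End 𝕜 M) - 1 - ξ) z := by
      simp only [LinearMap.sub_apply, Module.End.one_apply]
      abel
    rw [heq]; exact add_mem hw1 hmem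
  · have htop : ordM Mf (((u : Module.End 𝕜 M) - 1) z) = ⊤ := by
      rwa [lt_top_iff_ne_top, not_ne_iff] at hfin
    have hmem : ((u : Module.End 𝕜 M) - 1) z ∈ Mf (2 * k + d) :=
      mem_of_le_ordM Mf hMf0 hMf (by rw [htop]; exact le_top)
    refine ⟨0, zero_mem T, (EndS Mf k).zero_mem, ?_⟩
    have heq : w - (0 : Module.End 𝕜 M) z = (w - ((u : Module.End 𝕜 M) - 1) z)
        + ((u : Module.End 𝕜 M) - 1) z := by
      simp
    rw [heq]; exact add_mem hw1 hmem

lemma iter11 (Mf : ℕ → Submodule 𝕜 M) (hMf0 : Mf 0 = ⊤) (hMf : Antitone Mf)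
    (G : Subgroup (Module.End 𝕜 M)ˣ)
    (T : Submodule 𝕜 (Module.End 𝕜 M))
    (hLie : IsPointwiseWeakLie Mf T G)
    (z : M) (d : ℕ) (hz : ordM Mf z = (d : ℕ∞)) (N : ℕ)
    (hGz : ∀ k : ℕ, 1 ≤ k → ∀ w ∈ Mf (N + k + d),
      z + w ∈ clFil Mf (GOrbit Mf G k z)) :
    ∀ n : ℕ, ∀ k : ℕ, N < k → ∀ w ∈ Mf (N + k + d),
      ∃ ξ : Module.End 𝕜 M, ξ ∈ T ∧ ξ ∈ EndS Mf k ∧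
        w - ξ z ∈ Mf (2 * N + 2 ^ n * (k - N) + d) := by
  intro n
  induction n with
  | zero =>
    intro k hk w hw
    refine ⟨0, zero_mem T, (EndS Mf k).zero_mem, ?_⟩
    have h0 : w - (0 : Module.End 𝕜 M) z = w := by simp
    have hl : 2 * N + 2 ^ 0 * (k - N) + d = N + k + d := by
      simp only [pow_zero, one_mul]; omega
    rw [h0, hl]; exact hw
  | succ n ih =>
    intro k hk w hw
    obtain ⟨ξ₁, hξ₁T, hξ₁k, hr⟩ := step11 Mf hMf0 hMf G T hLie z d hz N hGz hk hw
    have hk'N : N < k + (k - N) := by omega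
    have hr' : w - ξ₁ z ∈ Mf (N + (k + (k - N)) + d) := by
      have hl : N + (k + (k - N)) + d = 2 * k + d := by omega
      rw [hl]; exact hr
    obtain ⟨ξ₂, hξ₂T, hξ₂k', hr₂⟩ := ih (k + (k - N)) hk'N _ hr'
    refine ⟨ξ₁ + ξ₂, add_mem hξ₁T hξ₂T,
      add_mem hξ₁k (endS_anti Mf hMf (by omega) hξ₂k'), ?_⟩
    have heq : w - (ξ₁ + ξ₂) z = (w - ξ₁ z) - ξ₂ z := by
      simp only [LinearMap.add_apply]; abel
    have hlvl : 2 * N + 2 ^ n * (k + (k - N) - N) + d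
        = 2 * N + 2 ^ (n + 1) * (k - N) + d := by
      have h2 : k + (k - N) - N = 2 * (k - N) := by omega
      rw [h2]; ring
    rw [heq, ← hlvl]; exact hr₂

/-- if the pair `(T, G^{(1)})` is pointwise of weak Lie type, `z ∈ M` has
finite order `d`, and for every `k ≥ 1` the closure of the orbit `G^{(k)}z` contains
`{z} + M_{N+k+d}`, then for every `k > N` the closure of `T^{(k)}(z)` contains
`M_{N+k+d}`. -/
theorem statement11 (Mf : ℕ → Submodule 𝕜 M) (hMf0 : Mf 0 = ⊤) (hMf : Antitone Mf)
    (G : Subgroup (Module.End 𝕜 M)ˣ)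
    (hG : (G : Set (Module.End 𝕜 M)ˣ) ⊆ GLFil Mf 1)
    (T : Submodule 𝕜 (Module.End 𝕜 M)) (hT : T ≤ EndS Mf 1)
    (hLie : IsPointwiseWeakLie Mf T G)
    (z : M) (d : ℕ) (hz : ordM Mf z = (d : ℕ∞)) (N : ℕ)
    (hGz : ∀ k : ℕ, 1 ≤ k → ∀ w ∈ Mf (N + k + d),
      z + w ∈ clFil Mf (GOrbit Mf G k z)) :
    ∀ k : ℕ, N < k → ↑(Mf (N + k + d)) ⊆ clFil Mf (TOrbit Mf T k z) := by
  intro k hk w hw j hj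
  obtain ⟨ξ, hξT, hξk, hr⟩ := iter11 Mf hMf0 hMf G T hLie z d hz N hGz j k hk w hw
  refine ⟨ξ z, ⟨ξ, hξT, hξk, rfl⟩, ?_⟩
  have hjle : j ≤ 2 * N + 2 ^ j * (k - N) + d := by
    have h1 : j < 2 ^ j := Nat.lt_two_pow_self
    have h2 : 1 ≤ k - N := by omega
    have h3 : 2 ^ j ≤ 2 ^ j * (k - N) := Nat.le_mul_of_pos_right _ h2
    omega
  exact hMf hjle hr
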